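/- (Exact λ-th moment of the one-dimensional Gaussian mechanism.) Let m, m' ∈ ℝ and σ > 0, and let μ = N(m, σ²) and ν = N(m', σ²) be Gaussian measures on ℝ. Then μ ≪ ν and for every real λ > 0, ∫ (dμ/dν)^λ dμ = exp( λ(λ+1)(m − m')² / (2σ²) ); equivalently, the λ-th moment of the privacy loss is α(λ) = λ(λ+1)(m − m')²/(2σ²). -/

import Mathlib

open MeasureTheory ProbabilityTheory Real

/-- Exact λ-th moment of the one-dimensional Gaussian mechanism:
for `μ = N(m, σ²)` and `ν = N(m', σ²)` with `σ > 0`, `μ ≪ ν` and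
`∫ (dμ/dν)^λ dμ = exp(λ(λ+1)(m-m')²/(2σ²))` for all `λ > 0`. -/
theorem gaussian_moment_eq
    (m m' σ : ℝ) (hσ : 0 < σ) :
    gaussianReal m ((σ ^ 2).toNNReal) ≪ gaussianReal m' ((σ ^ 2).toNNReal) ∧
      ∀ lam : ℝ, 0 < lam →
        ∫⁻ x, ((gaussianReal m ((σ ^ 2).toNNReal)).rnDeriv
            (gaussianReal m' ((σ ^ 2).toNNReal)) x) ^ lam
          ∂(gaussianReal m ((σ ^ 2).toNNReal))
        = ENNReal.ofReal (Real.exp (lam * (lam + 1) * (m - m') ^ 2 / (2 * σ ^ 2))) := by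
  have hσ2 : (0:ℝ) < σ ^ 2 := by positivity
  set v : NNReal := (σ ^ 2).toNNReal with hv_def
  have hv : v ≠ 0 := by
    simp only [hv_def, ne_eq, Real.toNNReal_eq_zero, not_le]
    exact hσ2
  have hvr : (v : ℝ) = σ ^ 2 := Real.coe_toNNReal _ hσ2.le
  set f := gaussianPDF m v with hf_def
  set g := gaussianPDF m' v with hg_def
  have hf : Measurable f := measurable_gaussianPDF _ _
  have hg : Measurable g := measurable_gaussianPDF _ _
  have hμ : gaussianReal m v = volume.withDensity f := gaussianReal_of_var_ne_zero m hv
  have hν : gaussianReal m' v = volume.withDensity g := gaussianReal_of_var_ne_zero m' hv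
  set h : ℝ → ENNReal := fun x ↦ f x / g x with hh_def
  have hh : Measurable h := hf.div hg
  have key : gaussianReal m v = (gaussianReal m' v).withDensity h := by
    rw [hμ, hν, ← withDensity_mul _ hg hh]
    congr 1
    ext x
    have hgx : g x ≠ 0 := (gaussianPDF_pos m' hv x).ne'
    have hgt : g x ≠ ⊤ := ENNReal.ofReal_ne_top
    show f x = g x * (f x / g x)
    exact (ENNReal.mul_div_cancel hgx hgt).symm
  have hac : gaussianReal m v ≪ gaussianReal m' v := by
    rw [key]; exact withDensity_absolutelyContinuous _ _
  refine ⟨hac, fun lam hlam ↦ ?_⟩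
  have hrn : (gaussianReal m v).rnDeriv (gaussianReal m' v)
      =ᵐ[gaussianReal m' v] h := by
    rw [key]; exact Measure.rnDeriv_withDensity _ hh
  have hrnμ : (gaussianReal m v).rnDeriv (gaussianReal m' v)
      =ᵐ[gaussianReal m v] h := hac.ae_le hrn
  calc ∫⁻ x, ((gaussianReal m v).rnDeriv (gaussianReal m' v) x) ^ lam
        ∂(gaussianReal m v)
      = ∫⁻ x, (h x) ^ lam ∂(gaussianReal m v) := by
        refine lintegral_congr_ae (hrnμ.mono fun x hx ↦ ?_)
        simp only [hx]
    _ = ∫⁻ x, (f * fun x ↦ (h x) ^ lam) x := by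
        rw [hμ, lintegral_withDensity_eq_lintegral_mul _ hf (hh.pow_const lam)]
    _ = ∫⁻ x, ENNReal.ofReal (Real.exp (lam * (lam + 1) * (m - m') ^ 2 / (2 * σ ^ 2)))
          * gaussianPDF ((lam + 1) * m - lam * m') v x := by
        refine lintegral_congr fun x ↦ ?_
        have hgrpos : 0 < gaussianPDFReal m' v x := gaussianPDFReal_pos _ _ _ hv
        have hfrpos : 0 < gaussianPDFReal m v x := gaussianPDFReal_pos _ _ _ hv
        have hratio : 0 < gaussianPDFReal m v x / gaussianPDFReal m' v x :=
          div_pos hfrpos hgrpos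
        have h1 : h x = ENNReal.ofReal (gaussianPDFReal m v x / gaussianPDFReal m' v x) := by
          simp only [hh_def, hf_def, hg_def, gaussianPDF]
          rw [ENNReal.ofReal_div_of_pos hgrpos]
        rw [Pi.mul_apply, h1, ENNReal.ofReal_rpow_of_pos hratio, hf_def, gaussianPDF, gaussianPDF,
          ← ENNReal.ofReal_mul hfrpos.le, ← ENNReal.ofReal_mul (Real.exp_pos _).le]
        congr 1
        have hc : (0:ℝ) < (√(2 * π * v))⁻¹ := by
          rw [inv_pos]
          refine Real.sqrt_pos.mpr ?_
          have := Real.pi_pos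
          rw [hvr]; positivity
        have hratio_eq : gaussianPDFReal m v x / gaussianPDFReal m' v x
            = Real.exp (- (x - m)^2 / (2 * v) - - (x - m')^2 / (2 * v)) := by
          rw [gaussianPDFReal, gaussianPDFReal, Real.exp_sub,
            mul_div_mul_left _ _ hc.ne']
        rw [hratio_eq, ← Real.exp_mul, gaussianPDFReal, gaussianPDFReal, mul_assoc,
          ← Real.exp_add,
          mul_left_comm (rexp (lam * (lam + 1) * (m - m') ^ 2 / (2 * σ ^ 2))),
          ← Real.exp_add]
        congr 1
        rw [Real.exp_eq_exp, hvr]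
        field_simp
        ring
    _ = ENNReal.ofReal (Real.exp (lam * (lam + 1) * (m - m') ^ 2 / (2 * σ ^ 2))) := by
        rw [lintegral_const_mul _ (measurable_gaussianPDF _ _),
          lintegral_gaussianPDF_eq_one _ hv, mul_one]
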